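/- arXiv:0906.3765 — 2 statements merged into one kernel-verified Lean document; each statement's English description precedes it below -/
import Mathlib

section
/- If a Turing machine M accepts coBHP and for every pair ⟨N',x'⟩ ∈ coHP there exists t₀ such that M runs for fewer than t₀ steps on input ⟨N',x',1^{t₀}⟩, then coHP is computably enumerable (hence a contradiction, since coHP is not c.e.). -/
open Nat.Partrec (Code)

/-- Inputs `⟨N, x, 1^t⟩`: a machine code `N`, an input `x`, and a padding length `t`. -/
abbrev Input : Type := (Code × ℕ) × ℕ

/-- `BHP`: the bounded halting problem, triples `⟨N,x,1^t⟩` such that `N` has an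
accepting computation on `x` within `t` steps. -/
def BHP : Set Input := {p | (Nat.Partrec.Code.evaln p.2 p.1.1 p.1.2).isSome}

/-- `coBHP`: the complement of the bounded halting problem. -/
def coBHP : Set Input := BHPᶜ

/-- `HP`: the halting problem. -/
def HP : Set (Code × ℕ) := {p | (p.1.eval p.2).Dom}

/-- `coHP`: the complement of the halting problem. -/
def coHP : Set (Code × ℕ) := HPᶜ

/-- An abstract (deterministic) Turing machine: an acceptance predicate on
inputs together with a running-time function `time` (T_M). -/
structure Machine (α : Type) where
  accepts : α → Prop
  time : α → ℕ

/-- `M` accepts exactly the language `L`. -/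
def Accepts {α : Type} (M : Machine α) (L : Set α) : Prop :=
  ∀ w, M.accepts w ↔ w ∈ L

/-- If a Turing machine `M` accepts `coBHP` (the simulation checking whether `M`
halts within fewer than `t` steps and accepts is effective, `hComp`; and `M` is a
one-tape machine so that halting on `⟨N,x,1^{t₀}⟩` in fewer than `t₀` steps means
the padding was not fully read and the behavior stabilizes for larger paddings,
`hStab`), and for every pair `⟨N',x'⟩ ∈ coHP` there exists `t₀` such that `M` runs
for fewer than `t₀` steps on input `⟨N',x',1^{t₀}⟩`, then `coHP` is computably
enumerable. -/
theorem coHP_ce_of_fast_machine (M : Machine Input)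
    (hAcc : Accepts M coBHP)
    (hComp : ComputablePred fun w : Input => M.accepts w ∧ M.time w < w.2)
    (hStab : ∀ (N : Code) (x t₀ t : ℕ), M.time ((N, x), t₀) < t₀ → t₀ ≤ t →
      ((M.accepts ((N, x), t) ↔ M.accepts ((N, x), t₀)) ∧
        M.time ((N, x), t) < t₀))
    (hFast : ∀ q ∈ coHP, ∃ t₀, M.time (q, t₀) < t₀) :
    REPred (fun q => q ∈ coHP) := by
  -- characterization
  have key : ∀ q : Code × ℕ, q ∈ coHP ↔ ∃ t, M.accepts (q, t) ∧ M.time (q, t) < t := by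
    intro q
    constructor
    · intro hq
      obtain ⟨t₀, ht₀⟩ := hFast q hq
      refine ⟨t₀, ?_, ht₀⟩
      rw [hAcc]
      simp only [coBHP, BHP, Set.mem_compl_iff, Set.mem_setOf_eq]
      intro hsome
      exact hq (Part.dom_iff_mem.2 ⟨_, Nat.Partrec.Code.evaln_sound (Option.get_mem hsome)⟩)
    · rintro ⟨t, hacc, htime⟩
      intro hq
      obtain ⟨y, hy⟩ := Part.dom_iff_mem.1 hq
      obtain ⟨k, hk⟩ := Nat.Partrec.Code.evaln_complete.1 hy
      set t' := max t k with ht'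
      have hst := hStab q.1 q.2 t t' htime (le_max_left _ _)
      have hacc' : M.accepts ((q.1, q.2), t') := by
        rw [hst.1]; simpa using hacc
      rw [hAcc] at hacc'
      apply hacc'
      simp only [coBHP, BHP, Set.mem_setOf_eq]
      have := Nat.Partrec.Code.evaln_mono (le_max_right t k) hk
      exact Option.isSome_iff_exists.2 ⟨y, this⟩
  -- computability
  obtain ⟨f, hf, hfp⟩ := ComputablePred.computable_iff.1 hComp
  have hfp' : ∀ w : Input, (M.accepts w ∧ M.time w < w.2) ↔ f w = true := fun w =>
    iff_of_eq (congrFun hfp w)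
  have hP : Partrec fun q : Code × ℕ =>
      (Nat.rfind fun n => Part.some (f (q, n))).map fun _ => () := by
    apply Partrec.map
    · exact Partrec.rfind hf.to₂.partrec₂
    · exact Computable.const ()
  apply hP.of_eq
  intro q
  apply Part.ext'
  · have hdom : (Part.assert (q ∈ coHP) fun _ => Part.some ()).Dom ↔ q ∈ coHP := by
      simp [Part.assert, Part.Dom]
    rw [hdom]
    simp only [Part.map_Dom, Nat.rfind_dom, Part.some_dom, Part.mem_some_iff]
    constructor
    · rintro ⟨n, hn, -⟩
      exact (key q).2 ⟨n, (hfp' (q, n)).2 hn.2⟩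
    · intro hq
      obtain ⟨t, ht⟩ := (key q).1 hq
      obtain ⟨n, hn, -⟩ := Nat.rfind_min' (p := fun n => f (q, n)) ((hfp' (q, t)).1 ht)
      exact ⟨n, Nat.rfind_spec hn, fun {_} _ => trivial⟩
  · intros; rfl
end

section
/- For every Turing machine M accepting coBHP there exists a pair ⟨N',x'⟩ ∈ coHP such that for all t, the running time of M on input ⟨N',x',1^t⟩ is at least t. -/
open Nat.Partrec (Code)

/-- For every Turing machine `M` accepting `coBHP` (where, effectively, one can
decide whether `M` accepts within fewer steps than its padding, `hComp`, and `M`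
is a one-tape machine whose behavior stabilizes once it halts without reading all
the padding, `hStab`), there exists a pair `⟨N',x'⟩ ∈ coHP` such that for all `t`,
the running time of `M` on input `⟨N',x',1^t⟩` is at least `t`. -/
theorem exists_hard_instance (M : Machine Input)
    (hAcc : Accepts M coBHP)
    (hComp : ComputablePred fun w : Input => M.accepts w ∧ M.time w < w.2)
    (hStab : ∀ (N : Code) (x t₀ t : ℕ), M.time ((N, x), t₀) < t₀ → t₀ ≤ t →
      ((M.accepts ((N, x), t) ↔ M.accepts ((N, x), t₀)) ∧
        M.time ((N, x), t) < t₀)) :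
    ∃ q ∈ coHP, ∀ t, t ≤ M.time (q, t) := by
  by_contra hcon
  push_neg at hcon
  -- hcon : ∀ q ∈ coHP, ∃ t, M.time (q, t) < t
  obtain ⟨f, hf, hpf⟩ := ComputablePred.computable_iff.1 hComp
  -- Key equivalence: membership in coHP is a Σ₁ condition via M
  have key : ∀ p : Code × ℕ, p ∈ coHP ↔ ∃ t, f (p, t) = true := by
    intro p
    constructor
    · intro hp
      obtain ⟨t, ht⟩ := hcon p hp
      refine ⟨t, ?_⟩
      have hacc : M.accepts (p, t) := by
        rw [hAcc]
        simp only [coBHP, BHP, Set.mem_compl_iff, Set.mem_setOf_eq]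
        intro hs
        obtain ⟨a, ha⟩ := Option.isSome_iff_exists.1 hs
        exact hp (Part.dom_iff_mem.2 ⟨a, Nat.Partrec.Code.evaln_sound ha⟩)
      have h1 := iff_of_eq (congrFun hpf (p, t))
      simpa using h1.1 ⟨hacc, ht⟩
    · rintro ⟨t, ht⟩ hp
      have h1 := iff_of_eq (congrFun hpf (p, t))
      simp only at h1
      obtain ⟨hacc, hlt⟩ := h1.2 (by simpa using ht)
      obtain ⟨a, ha⟩ := Part.dom_iff_mem.1 hp
      obtain ⟨k, hk⟩ := Nat.Partrec.Code.evaln_complete.1 ha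
      set s := max k t with hs
      have hmono : a ∈ Nat.Partrec.Code.evaln s p.1 p.2 :=
        Nat.Partrec.Code.evaln_mono (le_max_left _ _) hk
      have hstab := (hStab p.1 p.2 t s hlt (le_max_right _ _)).1
      have haccs : M.accepts ((p.1, p.2), s) := hstab.2 hacc
      have : ((p.1, p.2), s) ∈ coBHP := (hAcc _).1 haccs
      simp only [coBHP, BHP, Set.mem_compl_iff, Set.mem_setOf_eq] at this
      exact this (Option.isSome_iff_exists.2 ⟨a, hmono⟩)
  -- coHP is r.e.
  have hre : REPred (· ∈ coHP) := by
    have hdom : Partrec fun p : Code × ℕ =>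
        Nat.rfind fun t => (Part.some (f (p, t)) : Part Bool) := by
      apply Partrec.rfind
      exact Computable₂.partrec₂ ((hf.comp Computable.id).to₂ :
        Computable₂ fun (p : Code × ℕ) (t : ℕ) => f (p, t))
    have := hdom.dom_re
    have heq : (fun p : Code × ℕ =>
        (Nat.rfind fun t => (Part.some (f (p, t)) : Part Bool)).Dom) = (· ∈ coHP) := by
      funext p
      apply propext
      refine Nat.rfind_dom.trans ?_; rw [key p]
      constructor
      · rintro ⟨n, hn, -⟩
        exact ⟨n, (Part.mem_some_iff.1 hn).symm⟩
      · rintro ⟨n, hn⟩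
        exact ⟨n, Part.mem_some_iff.2 hn.symm, fun _ => trivial⟩
    rwa [heq] at this
  -- HP is r.e.
  have hre2 : REPred (· ∈ HP) := by
    have : Partrec fun p : Code × ℕ => p.1.eval p.2 :=
      Nat.Partrec.Code.eval_part.comp Computable.fst Computable.snd
    exact this.dom_re
  -- hence HP is computable, contradiction with the halting problem
  have hHP : ComputablePred (· ∈ HP) := by
    apply ComputablePred.computable_iff_re_compl_re'.2
    exact ⟨hre2, hre⟩
  obtain ⟨g, hg, hpg⟩ := ComputablePred.computable_iff.1 hHP
  apply ComputablePred.halting_problem 0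
  apply ComputablePred.computable_iff.2
  refine ⟨fun c => g (c, 0), hg.comp (Computable.id.pair (Computable.const 0)), ?_⟩
  funext c
  have := congrFun hpg (c, 0)
  exact this
end
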